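/- Let q and φ be positive integers with gcd(φ, q) = 1, and let g, h be invertible n×n integer matrices with h^q = 1 and g^{-1} h g = h^φ, acting on L = ℤⁿ by right multiplication. Write L^g = {α ∈ ℤⁿ : α g = α} and L^h = {α ∈ ℤⁿ : α h = α}. Then for any group homomorphism f : (ℤⁿ, +) → (ℂ*, ·) the following are equivalent: (i) there exist group homomorphisms ξ_g, ξ_h : (ℤⁿ, +) → (ℂ*, ·) with ξ_g(α) = 1 for all α ∈ L^g, ξ_h(α) = 1 for all α ∈ L^h, and ξ_g( α·g^{-1}(h − 1) ) · ξ_h( α·(g^{-1} − Σ_{i=0}^{φ−1} h^i) ) = f(α) for all α ∈ ℤⁿ; (ii) f(α) = 1 for every α ∈ ℤⁿ with α·g^{-1}(h − 1)(1 − g) = 0. -/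

import Mathlib

open Matrix

/-- A chosen `n`-th root in `ℂˣ`. -/
noncomputable def crootNat (a : ℂˣ) (n : ℕ) : ℂˣ :=
  if h : n = 0 then 1 else
    Units.mk0 (IsAlgClosed.exists_pow_nat_eq (a : ℂ) (Nat.pos_of_ne_zero h)).choose (by
      intro h0
      have hs := (IsAlgClosed.exists_pow_nat_eq (a : ℂ) (Nat.pos_of_ne_zero h)).choose_spec
      rw [h0, zero_pow h] at hs
      exact a.ne_zero hs.symm)

theorem crootNat_pow (a : ℂˣ) {n : ℕ} (hn : n ≠ 0) : crootNat a n ^ n = a := by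
  rw [crootNat, dif_neg hn]
  ext
  push_cast
  exact (IsAlgClosed.exists_pow_nat_eq (a : ℂ) (Nat.pos_of_ne_zero hn)).choose_spec

noncomputable instance : RootableBy ℂˣ ℕ where
  root := crootNat
  root_zero a := by simp [crootNat]
  root_cancel {n} a hn := crootNat_pow a hn

noncomputable instance : RootableBy ℂˣ ℤ := Group.rootableByIntOfRootableByNat ℂˣ

noncomputable instance : DivisibleBy (Additive ℂˣ) ℤ where
  div a n := Additive.ofMul (RootableBy.root a.toMul n)
  div_zero a := congrArg Additive.ofMul (RootableBy.root_zero a.toMul)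
  div_cancel {n} a hn := by
    change Additive.ofMul ((RootableBy.root a.toMul n) ^ n) = a
    rw [RootableBy.root_cancel _ hn]
    rfl

noncomputable instance : Module.Injective ℤ (Additive ℂˣ) :=
  (Module.Baer.of_divisible _).injective

theorem splitting_lift_obstruction
    (n q φ : ℕ) (hq : 0 < q) (hφ : 0 < φ) (hcop : Nat.Coprime φ q)
    (g h : (Matrix (Fin n) (Fin n) ℤ)ˣ)
    (hhq : h ^ q = 1) (hgh : g⁻¹ * h * g = h ^ φ)
    (f : (Fin n → ℤ) → ℂˣ) (hf : ∀ α β, f (α + β) = f α * f β) :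
    (∃ ξg ξh : (Fin n → ℤ) → ℂˣ,
        (∀ α β, ξg (α + β) = ξg α * ξg β) ∧
        (∀ α β, ξh (α + β) = ξh α * ξh β) ∧
        (∀ α, Matrix.vecMul α (g : Matrix (Fin n) (Fin n) ℤ) = α → ξg α = 1) ∧
        (∀ α, Matrix.vecMul α (h : Matrix (Fin n) (Fin n) ℤ) = α → ξh α = 1) ∧
        (∀ α, ξg (Matrix.vecMul α
              (((g⁻¹ : (Matrix (Fin n) (Fin n) ℤ)ˣ) : Matrix (Fin n) (Fin n) ℤ) *
                ((h : Matrix (Fin n) (Fin n) ℤ) - 1))) *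
            ξh (Matrix.vecMul α
              (((g⁻¹ : (Matrix (Fin n) (Fin n) ℤ)ˣ) : Matrix (Fin n) (Fin n) ℤ) -
                ∑ i ∈ Finset.range φ, (h : Matrix (Fin n) (Fin n) ℤ) ^ i)) = f α)) ↔
      (∀ α : Fin n → ℤ,
        Matrix.vecMul α
            (((g⁻¹ : (Matrix (Fin n) (Fin n) ℤ)ˣ) : Matrix (Fin n) (Fin n) ℤ) *
              ((h : Matrix (Fin n) (Fin n) ℤ) - 1) *
              (1 - (g : Matrix (Fin n) (Fin n) ℤ))) = 0 → f α = 1) := by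
  classical
  set G : Matrix (Fin n) (Fin n) ℤ := (g : Matrix (Fin n) (Fin n) ℤ) with hG
  set H : Matrix (Fin n) (Fin n) ℤ := (h : Matrix (Fin n) (Fin n) ℤ) with hH
  set Gi : Matrix (Fin n) (Fin n) ℤ :=
    ((g⁻¹ : (Matrix (Fin n) (Fin n) ℤ)ˣ) : Matrix (Fin n) (Fin n) ℤ) with hGi
  set A : Matrix (Fin n) (Fin n) ℤ := Gi * (H - 1) with hA
  set B : Matrix (Fin n) (Fin n) ℤ := Gi - ∑ i ∈ Finset.range φ, H ^ i with hB
  have hGiG : Gi * G = 1 := by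
    have := congrArg Units.val (inv_mul_cancel g)
    rw [Units.val_mul, Units.val_one] at this
    exact this
  have hGHG : Gi * H * G = H ^ φ := by
    have := congrArg Units.val hgh
    rw [Units.val_mul, Units.val_mul, Units.val_pow_eq_pow_val] at this
    exact this
  -- the key matrix identity
  have key : A * (1 - G) = B * (H - 1) := by
    have h1 : (∑ i ∈ Finset.range φ, H ^ i) * (H - 1) = H ^ φ - 1 := geom_sum_mul H φ
    have h2 : A * G = H ^ φ - 1 := by
      rw [hA]
      calc Gi * (H - 1) * G = Gi * H * G - Gi * G := by noncomm_ring
        _ = H ^ φ - 1 := by rw [hGHG, hGiG]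
    rw [mul_sub, mul_one, h2, hB, sub_mul, h1, hA]
  have f0 : f 0 = 1 := by
    have := hf 0 0
    rw [add_zero] at this
    exact (mul_eq_left.mp this.symm)
  -- the two kernels coincide
  have kerg : ∀ α : Fin n → ℤ, vecMul α (A * (1 - G)) = 0 →
      vecMul (vecMul α A) G = vecMul α A := by
    intro α hα
    rw [mul_sub, mul_one, Matrix.vecMul_sub, sub_eq_zero] at hα
    rw [Matrix.vecMul_vecMul]
    exact hα.symm
  have kerh : ∀ α : Fin n → ℤ, vecMul α (A * (1 - G)) = 0 →
      vecMul (vecMul α B) H = vecMul α B := by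
    intro α hα
    rw [key] at hα
    have : B * (H - 1) = B * H - B * 1 := mul_sub B H 1
    rw [this, mul_one, Matrix.vecMul_sub, sub_eq_zero] at hα
    rw [Matrix.vecMul_vecMul]
    exact hα
  constructor
  · rintro ⟨ξg, ξh, hξg, hξh, trivg, trivh, hmain⟩ α hα
    rw [← hmain α, trivg _ (kerg α hα), trivh _ (kerh α hα), one_mul]
  · intro hker
    -- package f as an additive hom
    let fA : (Fin n → ℤ) →+ Additive ℂˣ :=
      { toFun := fun α => Additive.ofMul (f α)
        map_zero' := by show Additive.ofMul (f 0) = 0; rw [f0]; rfl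
        map_add' := fun α β => by
          show Additive.ofMul (f (α + β)) = Additive.ofMul (f α) + Additive.ofMul (f β)
          rw [hf]
          rfl }
    set Sg : Submodule ℤ (Fin n → ℤ) := LinearMap.ker (Matrix.vecMulLinear (G - 1)) with hSg
    set Sh : Submodule ℤ (Fin n → ℤ) := LinearMap.ker (Matrix.vecMulLinear (H - 1)) with hSh
    set Ψ : ((Fin n → ℤ) × (Sg × Sh)) →ₗ[ℤ] (Fin n → ℤ) × (Fin n → ℤ) := LinearMap.prod
      ((Matrix.vecMulLinear A).comp (LinearMap.fst ℤ (Fin n → ℤ) (Sg × Sh)) +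
        (Sg.subtype.comp ((LinearMap.fst ℤ Sg Sh).comp (LinearMap.snd ℤ (Fin n → ℤ) (Sg × Sh)))))
      ((Matrix.vecMulLinear B).comp (LinearMap.fst ℤ (Fin n → ℤ) (Sg × Sh)) +
        (Sh.subtype.comp ((LinearMap.snd ℤ Sg Sh).comp (LinearMap.snd ℤ (Fin n → ℤ) (Sg × Sh)))))
      with hΨdef
    have hΨ : ∀ d : (Fin n → ℤ) × (Sg × Sh),
        Ψ d = (vecMul d.1 A + (d.2.1 : Fin n → ℤ), vecMul d.1 B + (d.2.2 : Fin n → ℤ)) := by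
      intro d
      rfl
    set F : ((Fin n → ℤ) × (Sg × Sh)) →ₗ[ℤ] Additive ℂˣ :=
      fA.toIntLinearMap.comp (LinearMap.fst ℤ (Fin n → ℤ) (Sg × Sh)) with hF
    have hkerF : LinearMap.ker Ψ ≤ LinearMap.ker F := by
      rintro ⟨α, u, v⟩ hd
      rw [LinearMap.mem_ker, hΨ, Prod.mk_eq_zero] at hd
      have hu : vecMul (u : Fin n → ℤ) (G - 1) = 0 := u.2
      have h1 : vecMul α A = -(u : Fin n → ℤ) := by
        have := hd.1
        dsimp only at this
        linear_combination (norm := abel) this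
      have h2 : vecMul α (A * (1 - G)) = 0 := by
        rw [← Matrix.vecMul_vecMul, h1]
        have : vecMul (-(u : Fin n → ℤ)) (1 - G) = - vecMul (u : Fin n → ℤ) (1 - G) := by
          simp [Matrix.neg_vecMul]
        rw [this]
        have h3 : vecMul (u : Fin n → ℤ) (1 - G) = - vecMul (u : Fin n → ℤ) (G - 1) := by
          rw [Matrix.vecMul_sub, Matrix.vecMul_sub, Matrix.vecMul_one]
          abel
        rw [h3, hu]
        simp
      rw [LinearMap.mem_ker, hF]
      have : f α = 1 := hker α h2
      show fA α = 0
      show Additive.ofMul (f α) = 0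
      rw [this]
      rfl
    set F' : (((Fin n → ℤ) × (Sg × Sh)) ⧸ LinearMap.ker Ψ) →ₗ[ℤ] Additive ℂˣ :=
      Submodule.liftQ _ F hkerF with hF'
    set e := LinearMap.quotKerEquivRange Ψ with he
    set φ0 : LinearMap.range Ψ →ₗ[ℤ] Additive ℂˣ :=
      F'.comp (e.symm : (LinearMap.range Ψ) →ₗ[ℤ] (((Fin n → ℤ) × (Sg × Sh)) ⧸ LinearMap.ker Ψ))
      with hφ0
    obtain ⟨Φ, hΦ⟩ := Module.Injective.out (LinearMap.range Ψ).subtype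
      (Submodule.injective_subtype _) φ0
    have hΦΨ : ∀ d : (Fin n → ℤ) × (Sg × Sh), Φ (Ψ d) = F d := by
      intro d
      have hmem : Ψ d ∈ LinearMap.range Ψ := ⟨d, rfl⟩
      have h1 : Φ (Ψ d) = φ0 ⟨Ψ d, hmem⟩ := hΦ ⟨Ψ d, hmem⟩
      rw [h1, hφ0, LinearMap.comp_apply]
      have h2 : e (Submodule.Quotient.mk d) = ⟨Ψ d, hmem⟩ :=
        Subtype.ext (LinearMap.quotKerEquivRange_apply_mk Ψ d)
      have h3 : (e.symm : (LinearMap.range Ψ) →ₗ[ℤ]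
          (((Fin n → ℤ) × (Sg × Sh)) ⧸ LinearMap.ker Ψ)) ⟨Ψ d, hmem⟩ = Submodule.Quotient.mk d := by
        rw [← h2]
        exact e.symm_apply_apply _
      rw [h3, hF']
      exact Submodule.liftQ_apply _ F d
    refine ⟨fun x => Additive.toMul (Φ (x, 0)), fun y => Additive.toMul (Φ (0, y)),
      ?_, ?_, ?_, ?_, ?_⟩
    · intro α β
      show Additive.toMul (Φ (α + β, 0)) =
        Additive.toMul (Φ (α, 0)) * Additive.toMul (Φ (β, 0))
      have h1 : ((α + β : Fin n → ℤ), (0 : Fin n → ℤ)) =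
          ((α, 0) : (Fin n → ℤ) × (Fin n → ℤ)) + (β, 0) := by
        simp [Prod.ext_iff]
      rw [h1, map_add]
      rfl
    · intro α β
      show Additive.toMul (Φ (0, α + β)) =
        Additive.toMul (Φ (0, α)) * Additive.toMul (Φ (0, β))
      have h1 : ((0 : Fin n → ℤ), (α + β : Fin n → ℤ)) =
          ((0, α) : (Fin n → ℤ) × (Fin n → ℤ)) + (0, β) := by
        simp [Prod.ext_iff]
      rw [h1, map_add]
      rfl
    · intro α hα
      show Additive.toMul (Φ (α, 0)) = 1
      have hmem : α ∈ Sg := by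
        rw [hSg, LinearMap.mem_ker, Matrix.vecMulLinear_apply, Matrix.vecMul_sub,
          Matrix.vecMul_one, hα, sub_self]
      have hd : Ψ (0, (⟨α, hmem⟩, 0)) = ((α : Fin n → ℤ), (0 : Fin n → ℤ)) := by
        rw [hΨ]
        simp
      have heq := hΦΨ (0, (⟨α, hmem⟩, 0))
      rw [hd] at heq
      rw [heq]
      show Additive.toMul (Additive.ofMul (f 0)) = 1
      rw [f0]
      rfl
    · intro α hα
      show Additive.toMul (Φ (0, α)) = 1
      have hmem : α ∈ Sh := by
        rw [hSh, LinearMap.mem_ker, Matrix.vecMulLinear_apply, Matrix.vecMul_sub,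
          Matrix.vecMul_one, hα, sub_self]
      have hd : Ψ (0, (0, ⟨α, hmem⟩)) = ((0 : Fin n → ℤ), (α : Fin n → ℤ)) := by
        rw [hΨ]
        simp
      have heq := hΦΨ (0, (0, ⟨α, hmem⟩))
      rw [hd] at heq
      rw [heq]
      show Additive.toMul (Additive.ofMul (f 0)) = 1
      rw [f0]
      rfl
    · intro α
      show Additive.toMul (Φ (vecMul α A, 0)) * Additive.toMul (Φ (0, vecMul α B)) = f α
      have hd : Ψ (α, (0, 0)) = ((vecMul α A : Fin n → ℤ), (vecMul α B : Fin n → ℤ)) := by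
        rw [hΨ]
        simp
      have hsplit : ((vecMul α A : Fin n → ℤ), (vecMul α B : Fin n → ℤ)) =
          ((vecMul α A, 0) : (Fin n → ℤ) × (Fin n → ℤ)) + (0, vecMul α B) := by
        simp [Prod.ext_iff]
      have h1 : Φ (vecMul α A, 0) + Φ (0, vecMul α B) = F (α, (0, 0)) := by
        rw [← map_add, ← hsplit, ← hd, hΦΨ]
      have h2 : F (α, (0, 0)) = Additive.ofMul (f α) := rfl
      calc Additive.toMul (Φ (vecMul α A, 0)) * Additive.toMul (Φ (0, vecMul α B))
          = Additive.toMul (Φ (vecMul α A, 0) + Φ (0, vecMul α B)) := rfl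
        _ = f α := by rw [h1, h2]; rfl
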